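/- Let {u_{N,l}} and {v_{N,l}} (0 ≤ l ≤ N−1, N ≥ 1) be real triangular arrays with b' ≥ u_{N,0} ≥ u_{N,1} ≥ … ≥ u_{N,N−1} ≥ a' and b' ≥ v_{N,0} ≥ v_{N,1} ≥ … ≥ v_{N,N−1} ≥ a' for all N. Let g : [c,d] → ℝ (with c < d) be continuous and non-constant, and let [a,b] be the smallest closed interval containing both [a',b'] and the range of g. Assume: (i) lim_{N→∞} u_{N,0} = lim_{N→∞} v_{N,0} = max_{x∈[c,d]} g(x); (ii) lim_{N→∞} u_{N,N−1} = lim_{N→∞} v_{N,N−1} = min_{x∈[c,d]} g(x); (iii) for every continuous ϑ : [a,b] → ℝ, lim_{N→∞} (1/N)·∑_{l=0}^{N−1} ϑ(u_{N,l}) = (1/(d−c))·∫_c^d ϑ(g(x)) dx. Then the following are equivalent: (1) for every continuous ϑ : [a,b] → ℝ, lim_{N→∞} (1/N)·∑_{l=0}^{N−1} (ϑ(u_{N,l}) − ϑ(v_{N,l})) = 0; (2) lim_{N→∞} max_{0≤l≤N−1} |u_{N,l} − v_{N,l}| = 0. -/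
import Mathlib

open MeasureTheory Filter Finset

noncomputable section

/-- An increasing continuous plateau function: `0` for `t ≤ p`, `1` for `t ≥ p + h`. -/
def eqdist_sF (p h t : ℝ) : ℝ := max 0 (min 1 ((t - p) / h))

lemma eqdist_sF_nonneg (p h t : ℝ) : 0 ≤ eqdist_sF p h t := le_max_left _ _

lemma eqdist_sF_le_one (p h t : ℝ) : eqdist_sF p h t ≤ 1 :=
  max_le zero_le_one (min_le_left _ _)

lemma eqdist_sF_eq_zero {p h t : ℝ} (hh : 0 ≤ h) (ht : t ≤ p) : eqdist_sF p h t = 0 := by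
  have hx : (t - p) / h ≤ 0 := div_nonpos_of_nonpos_of_nonneg (by linarith) hh
  exact max_eq_left ((min_le_right _ _).trans hx)

lemma eqdist_sF_eq_one {p h t : ℝ} (hh : 0 < h) (ht : p + h ≤ t) : eqdist_sF p h t = 1 := by
  have hx : (1 : ℝ) ≤ (t - p) / h := (one_le_div hh).2 (by linarith)
  rw [eqdist_sF, min_eq_left hx]
  exact max_eq_right zero_le_one

lemma eqdist_sF_anti {p q h : ℝ} (hh : 0 < h) (hpq : p ≤ q) (t : ℝ) :
    eqdist_sF q h t ≤ eqdist_sF p h t := by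
  have : (t - q) / h ≤ (t - p) / h :=
    div_le_div_of_nonneg_right (by linarith) hh.le
  exact max_le_max le_rfl (min_le_min le_rfl this)

lemma eqdist_sF_continuous (p h : ℝ) : Continuous (eqdist_sF p h) := by
  unfold eqdist_sF; fun_prop

lemma eqdist_gap_pos {c d : ℝ} (hcd : c < d) {g : ℝ → ℝ}
    (hg : ContinuousOn g (Set.Icc c d)) {m M : ℝ}
    (hrange : g '' Set.Icc c d = Set.Icc m M)
    {h p : ℝ} (hh : 0 < h) (hp1 : m ≤ p + h) (hp2 : p + h < M) :
    0 < ∫ x in c..d, (eqdist_sF p h (g x) - eqdist_sF (p + 4 * h) h (g x)) := by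
  set t : ℝ := min (p + 2 * h) ((p + h + M) / 2) with htdef
  have ht1 : p + h < t := lt_min (by linarith) (by linarith)
  have ht2 : t < p + 4 * h := (min_le_left _ _).trans_lt (by linarith)
  have ht3 : t < M := (min_le_right _ _).trans_lt (by linarith)
  have htmem : t ∈ Set.Icc m M := ⟨by linarith, ht3.le⟩
  rw [← hrange] at htmem
  obtain ⟨x0, hx0, hgx0⟩ := htmem
  have hnhds : g ⁻¹' Set.Ioo (p + h) (p + 4 * h) ∈ nhdsWithin x0 (Set.Icc c d) :=
    (hg x0 hx0) (isOpen_Ioo.mem_nhds (by rw [hgx0]; exact ⟨ht1, ht2⟩))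
  rw [Metric.mem_nhdsWithin_iff] at hnhds
  obtain ⟨r, hr, hball⟩ := hnhds
  set x1 : ℝ := max c (x0 - r / 2) with hx1def
  set x2 : ℝ := min d (x0 + r / 2) with hx2def
  have hx12 : x1 < x2 := by
    apply max_lt <;> apply lt_min
    · exact hcd
    · linarith [hx0.1]
    · linarith [hx0.2]
    · linarith
  have hslab : ∀ x ∈ Set.Icc x1 x2, g x ∈ Set.Ioo (p + h) (p + 4 * h) := by
    intro x hx
    apply hball
    constructor
    · rw [Metric.mem_ball, Real.dist_eq, abs_sub_lt_iff]
      constructor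
      · have := hx.2; have : x ≤ x0 + r / 2 := le_trans this (min_le_right _ _); linarith
      · have := hx.1; have : x0 - r / 2 ≤ x := le_trans (le_max_right _ _) this; linarith
    · exact ⟨le_trans (le_max_left _ _) hx.1, le_trans hx.2 (min_le_left _ _)⟩
  set f : ℝ → ℝ := fun x => eqdist_sF p h (g x) - eqdist_sF (p + 4 * h) h (g x) with hfdef
  have hf_nonneg : ∀ x, 0 ≤ f x := fun x =>
    sub_nonneg.2 (eqdist_sF_anti (p := p) (q := p + 4 * h) hh (by linarith) (g x))
  have hfi : IntervalIntegrable f volume c d := by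
    apply ContinuousOn.intervalIntegrable
    rw [Set.uIcc_of_le hcd.le]
    exact (((eqdist_sF_continuous p h).comp_continuousOn hg).sub
      (((eqdist_sF_continuous (p + 4 * h) h).comp_continuousOn hg)))
  have hfi' : IntervalIntegrable f volume x1 x2 := by
    apply hfi.mono_set
    rw [Set.uIcc_of_le hcd.le, Set.uIcc_of_le hx12.le]
    exact Set.Icc_subset_Icc (le_max_left _ _) (min_le_left _ _)
  have step1 : x2 - x1 ≤ ∫ x in x1..x2, f x := by
    have : ∫ x in x1..x2, (1 : ℝ) = x2 - x1 := by simp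
    rw [← this]
    apply intervalIntegral.integral_mono_on hx12.le intervalIntegrable_const hfi'
    intro x hx
    obtain ⟨hg1, hg2⟩ := hslab x hx
    rw [hfdef]
    simp only
    rw [eqdist_sF_eq_one hh (by linarith), eqdist_sF_eq_zero hh.le (by linarith)]
    norm_num
  have step2 : (∫ x in x1..x2, f x) ≤ ∫ x in c..d, f x := by
    apply intervalIntegral.integral_mono_interval (le_max_left _ _) hx12.le (min_le_left _ _)
      (ae_of_all _ hf_nonneg) hfi
  linarith

lemma eqdist_core (a b c d m M : ℝ) (hcd : c < d) (g : ℝ → ℝ)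
    (hg : ContinuousOn g (Set.Icc c d))
    (hrange : g '' Set.Icc c d = Set.Icc m M) (hMb : M ≤ b)
    (w w' : (N : ℕ) → Fin N → ℝ)
    (hw_mono : ∀ N : ℕ, ∀ i j : Fin N, i ≤ j → w N j ≤ w N i)
    (hw'_mono : ∀ N : ℕ, ∀ i j : Fin N, i ≤ j → w' N j ≤ w' N i)
    (hw'a : ∀ N : ℕ, ∀ l : Fin N, a ≤ w' N l)
    (hwtop : Tendsto (fun N : ℕ => w (N + 1) ⟨0, N.succ_pos⟩) atTop (nhds M))
    (hw'bot : Tendsto (fun N : ℕ => w' (N + 1) ⟨N, Nat.lt_succ_self N⟩) atTop (nhds m))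
    (hwdist : ∀ ϑ : ℝ → ℝ, Continuous ϑ →
      Tendsto (fun N : ℕ => (∑ l : Fin N, ϑ (w N l)) / N) atTop
        (nhds ((∫ x in c..d, ϑ (g x)) / (d - c))))
    (hw'dist : ∀ ϑ : ℝ → ℝ, Continuous ϑ →
      Tendsto (fun N : ℕ => (∑ l : Fin N, ϑ (w' N l)) / N) atTop
        (nhds ((∫ x in c..d, ϑ (g x)) / (d - c))))
    (ε : ℝ) (hε : 0 < ε) :
    ∀ᶠ N in atTop, ∀ l : Fin N, w N l - w' N l < ε := by
  set h : ℝ := ε / 8 with hhdef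
  have hh : 0 < h := by positivity
  set pt : ℕ → ℝ := fun i => a + i * h with hptdef
  set I : ℝ → ℝ := fun p => (∫ x in c..d, eqdist_sF p h (g x)) / (d - c) with hIdef
  set K : ℕ := ⌈(b - a) / h⌉₊ with hKdef
  set A : Finset ℕ := (Finset.range (K + 1)).filter
    (fun i => m - h ≤ pt i ∧ pt i ≤ M - 6 * h) with hAdef
  have hgap : ∀ i ∈ A, 0 < I (pt i) - I (pt i + 4 * h) := by
    intro i hi
    rw [hAdef, Finset.mem_filter] at hi
    obtain ⟨-, h1, h2⟩ := hi
    have hint : 0 < ∫ x in c..d,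
        (eqdist_sF (pt i) h (g x) - eqdist_sF (pt i + 4 * h) h (g x)) :=
      eqdist_gap_pos hcd hg hrange hh (by linarith) (by linarith)
    have i1 : IntervalIntegrable (fun x => eqdist_sF (pt i) h (g x)) volume c d := by
      apply ContinuousOn.intervalIntegrable; rw [Set.uIcc_of_le hcd.le]
      exact (eqdist_sF_continuous _ _).comp_continuousOn hg
    have i2 : IntervalIntegrable (fun x => eqdist_sF (pt i + 4 * h) h (g x)) volume c d := by
      apply ContinuousOn.intervalIntegrable; rw [Set.uIcc_of_le hcd.le]
      exact (eqdist_sF_continuous _ _).comp_continuousOn hg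
    rw [intervalIntegral.integral_sub i1 i2] at hint
    simp only [hIdef]
    rw [← sub_div]
    exact div_pos hint (by linarith)
  set δ : ℝ := if hA : A.Nonempty then A.inf' hA (fun i => I (pt i) - I (pt i + 4 * h)) else 1
    with hδdef
  have hδ : 0 < δ := by
    rw [hδdef]; split_ifs with hA
    · obtain ⟨i, hi, hieq⟩ := Finset.exists_mem_eq_inf' hA (fun i => I (pt i) - I (pt i + 4 * h))
      rw [hieq]; exact hgap i hi
    · exact one_pos
  have E1 : ∀ᶠ N : ℕ in atTop, ∀ i ∈ Finset.range (K + 5),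
      |(∑ l : Fin N, eqdist_sF (pt i) h (w N l)) / N - I (pt i)| < δ / 4 ∧
      |(∑ l : Fin N, eqdist_sF (pt i) h (w' N l)) / N - I (pt i)| < δ / 4 := by
    rw [Filter.eventually_all_finset]
    intro i _
    have t1 := hwdist (eqdist_sF (pt i) h) (eqdist_sF_continuous _ _)
    have t2 := hw'dist (eqdist_sF (pt i) h) (eqdist_sF_continuous _ _)
    have e1 := Metric.tendsto_nhds.mp t1 (δ / 4) (by linarith)
    have e2 := Metric.tendsto_nhds.mp t2 (δ / 4) (by linarith)
    filter_upwards [e1, e2] with N h1 h2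
    rw [Real.dist_eq] at h1 h2
    exact ⟨h1, h2⟩
  have E2 : ∀ᶠ n : ℕ in atTop, w (n + 1) ⟨0, n.succ_pos⟩ ≤ M + h ∧
      m - h ≤ w' (n + 1) ⟨n, Nat.lt_succ_self n⟩ := by
    have e1 := Metric.tendsto_nhds.mp hwtop h hh
    have e2 := Metric.tendsto_nhds.mp hw'bot h hh
    filter_upwards [e1, e2] with n h1 h2
    rw [Real.dist_eq, abs_sub_lt_iff] at h1 h2
    exact ⟨by linarith [h1.1], by linarith [h2.2]⟩
  obtain ⟨n1, hn1⟩ := eventually_atTop.mp E1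
  obtain ⟨n2, hn2⟩ := eventually_atTop.mp E2
  refine eventually_atTop.2 ⟨n1 + n2 + 1, ?_⟩
  intro N hN l
  obtain ⟨n, rfl⟩ : ∃ n, N = n + 1 := ⟨N - 1, by omega⟩
  by_contra hcon
  push_neg at hcon
  -- hcon : ε ≤ w (n+1) l - w' (n+1) l
  have hE1 := hn1 (n + 1) (by omega)
  have hE2 := hn2 n (by omega)
  have htop : ∀ j : Fin (n + 1), w (n + 1) j ≤ M + h := fun j =>
    le_trans (hw_mono _ ⟨0, n.succ_pos⟩ j (by simp [Fin.le_def])) hE2.1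
  have hbot : ∀ j : Fin (n + 1), m - h ≤ w' (n + 1) j := fun j =>
    le_trans hE2.2 (hw'_mono _ j ⟨n, Nat.lt_succ_self n⟩ (by
      rw [Fin.le_def]; exact Nat.le_of_lt_succ j.isLt))
  set q : ℝ := w' (n + 1) l with hqdef
  have hqa : a ≤ q := hw'a _ _
  set i : ℕ := ⌈(q - a) / h⌉₊ with hidef
  have hpq : q ≤ pt i := by
    have h1 : (q - a) / h ≤ (i : ℝ) := Nat.le_ceil _
    have h2 : q - a ≤ (i : ℝ) * h := (div_le_iff₀ hh).mp h1
    simp only [hptdef]; linarith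
  have hpq' : pt i ≤ q + h := by
    have h1 : (i : ℝ) < (q - a) / h + 1 := Nat.ceil_lt_add_one (div_nonneg (by linarith) hh.le)
    have h2 := mul_lt_mul_of_pos_right h1 hh
    rw [add_mul, div_mul_cancel₀ _ hh.ne', one_mul] at h2
    simp only [hptdef]; linarith
  have hε8 : ε = 8 * h := by rw [hhdef]; ring
  have hwl : pt i + 7 * h ≤ w (n + 1) l := by linarith [hcon]
  have hp2 : pt i ≤ M - 6 * h := by linarith [htop l]
  have hp1 : m - h ≤ pt i := by linarith [hbot l]
  have hiK : i ≤ K := by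
    have h1 : (i : ℝ) * h ≤ b - a := by
      have : pt i - a = (i : ℝ) * h := by simp [hptdef]
      linarith
    have h2 : (i : ℝ) ≤ (b - a) / h := (le_div_iff₀ hh).mpr h1
    calc i = ⌈((i : ℕ) : ℝ)⌉₊ := (Nat.ceil_natCast i).symm
    _ ≤ ⌈(b - a) / h⌉₊ := Nat.ceil_le_ceil h2
  have hiA : i ∈ A := by
    rw [hAdef, Finset.mem_filter]
    exact ⟨Finset.mem_range.2 (by omega), hp1, hp2⟩
  have hδle : δ ≤ I (pt i) - I (pt i + 4 * h) := by
    rw [hδdef, dif_pos ⟨i, hiA⟩]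
    exact Finset.inf'_le _ hiA
  have hpt4 : pt (i + 4) = pt i + 4 * h := by simp only [hptdef]; push_cast; ring
  have hEw := (hE1 (i + 4) (Finset.mem_range.2 (by omega))).1
  have hEw' := (hE1 i (Finset.mem_range.2 (by omega))).2
  rw [hpt4] at hEw
  rw [abs_sub_lt_iff] at hEw hEw'
  -- counting bounds
  have hNpos : (0 : ℝ) < ((n + 1 : ℕ) : ℝ) := by positivity
  have C1 : ((l : ℕ) : ℝ) + 1 ≤ ∑ j : Fin (n + 1), eqdist_sF (pt i + 4 * h) h (w (n + 1) j) := by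
    have step : ((l : ℕ) : ℝ) + 1 = ∑ j ∈ Finset.Iic l, eqdist_sF (pt i + 4 * h) h (w (n + 1) j) := by
      rw [Finset.sum_congr rfl (fun j hj => eqdist_sF_eq_one hh (by
        have hjl : j ≤ l := Finset.mem_Iic.mp hj
        have := hw_mono (n + 1) j l hjl
        linarith))]
      rw [Finset.sum_const, Fin.card_Iic, nsmul_eq_mul, mul_one]
      push_cast; ring
    rw [step]
    exact Finset.sum_le_sum_of_subset_of_nonneg (Finset.subset_univ _)
      (fun j _ _ => eqdist_sF_nonneg _ _ _)
  have C2 : ∑ j : Fin (n + 1), eqdist_sF (pt i) h (w' (n + 1) j) ≤ ((l : ℕ) : ℝ) := by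
    have step : ∑ j : Fin (n + 1), eqdist_sF (pt i) h (w' (n + 1) j)
        = ∑ j ∈ Finset.Iio l, eqdist_sF (pt i) h (w' (n + 1) j) := by
      refine (Finset.sum_subset (Finset.subset_univ _) (fun j _ hj => ?_)).symm
      have hlj : l ≤ j := le_of_not_gt (by simpa [Finset.mem_Iio] using hj)
      exact eqdist_sF_eq_zero hh.le (le_trans (hw'_mono (n + 1) l j hlj) hpq)
    rw [step]
    calc ∑ j ∈ Finset.Iio l, eqdist_sF (pt i) h (w' (n + 1) j)
        ≤ ∑ _j ∈ Finset.Iio l, (1 : ℝ) := Finset.sum_le_sum (fun j _ => eqdist_sF_le_one _ _ _)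
    _ = ((l : ℕ) : ℝ) := by rw [Finset.sum_const, Fin.card_Iio, nsmul_eq_mul, mul_one]
  have S1 : (((l : ℕ) : ℝ) + 1) / ((n + 1 : ℕ) : ℝ)
      ≤ (∑ j : Fin (n + 1), eqdist_sF (pt i + 4 * h) h (w (n + 1) j)) / ((n + 1 : ℕ) : ℝ) :=
    div_le_div_of_nonneg_right C1 hNpos.le
  have S2 : (∑ j : Fin (n + 1), eqdist_sF (pt i) h (w' (n + 1) j)) / ((n + 1 : ℕ) : ℝ)
      ≤ ((l : ℕ) : ℝ) / ((n + 1 : ℕ) : ℝ) :=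
    div_le_div_of_nonneg_right C2 hNpos.le
  have hone : (((l : ℕ) : ℝ) + 1) / ((n + 1 : ℕ) : ℝ)
      = ((l : ℕ) : ℝ) / ((n + 1 : ℕ) : ℝ) + 1 / ((n + 1 : ℕ) : ℝ) := add_div _ _ _
  have h1N : (0 : ℝ) < 1 / ((n + 1 : ℕ) : ℝ) := by positivity
  linarith [hEw.1, hEw'.2, S1, S2]

/-- Equal distribution implies individual asymptotic equivalence for decreasing triangular
arrays whose extreme entries converge to the extrema of a non-constant continuous
function `g`, and whose first array is distributed as `g`. -/
theorem equal_distribution_iff_individual_convergence_continuous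
    (u v : (N : ℕ) → Fin N → ℝ) (a' b' : ℝ)
    (hu_mono : ∀ N : ℕ, ∀ i j : Fin N, i ≤ j → u N j ≤ u N i)
    (hv_mono : ∀ N : ℕ, ∀ i j : Fin N, i ≤ j → v N j ≤ v N i)
    (hu_bdd : ∀ N : ℕ, ∀ l : Fin N, a' ≤ u N l ∧ u N l ≤ b')
    (hv_bdd : ∀ N : ℕ, ∀ l : Fin N, a' ≤ v N l ∧ v N l ≤ b')
    (c d : ℝ) (hcd : c < d) (g : ℝ → ℝ) (hg_cont : ContinuousOn g (Set.Icc c d))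
    (hg_nonconst : ∃ x ∈ Set.Icc c d, ∃ y ∈ Set.Icc c d, g x ≠ g y)
    (a b : ℝ)
    (ha : a = min a' (sInf (g '' Set.Icc c d)))
    (hb : b = max b' (sSup (g '' Set.Icc c d)))
    -- (i) the largest entries of both arrays converge to `max_{x ∈ [c,d]} g(x)`
    (hu_top : Tendsto (fun N : ℕ => u (N + 1) ⟨0, N.succ_pos⟩) atTop
      (nhds (sSup (g '' Set.Icc c d))))
    (hv_top : Tendsto (fun N : ℕ => v (N + 1) ⟨0, N.succ_pos⟩) atTop
      (nhds (sSup (g '' Set.Icc c d))))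
    -- (ii) the smallest entries of both arrays converge to `min_{x ∈ [c,d]} g(x)`
    (hu_bot : Tendsto (fun N : ℕ => u (N + 1) ⟨N, Nat.lt_succ_self N⟩) atTop
      (nhds (sInf (g '' Set.Icc c d))))
    (hv_bot : Tendsto (fun N : ℕ => v (N + 1) ⟨N, Nat.lt_succ_self N⟩) atTop
      (nhds (sInf (g '' Set.Icc c d))))
    -- (iii) the array `u` is distributed as `g`
    (hu_dist : ∀ ϑ : ℝ → ℝ, ContinuousOn ϑ (Set.Icc a b) →
      Tendsto (fun N : ℕ => (∑ l : Fin N, ϑ (u N l)) / N) atTop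
        (nhds ((∫ x in c..d, ϑ (g x)) / (d - c)))) :
    -- equal distribution of `u` and `v` is equivalent to individual convergence
    ((∀ ϑ : ℝ → ℝ, ContinuousOn ϑ (Set.Icc a b) →
        Tendsto (fun N : ℕ => (∑ l : Fin N, (ϑ (u N l) - ϑ (v N l))) / N) atTop (nhds 0))
      ↔ (∀ ε > (0:ℝ), ∃ N₀ : ℕ, ∀ N ≥ N₀, ∀ l : Fin N, |u N l - v N l| < ε)) := by
  set m : ℝ := sInf (g '' Set.Icc c d) with hmdef
  set M : ℝ := sSup (g '' Set.Icc c d) with hMdef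
  have hrange : g '' Set.Icc c d = Set.Icc m M := ContinuousOn.image_Icc hcd.le hg_cont
  have haa' : a ≤ a' := ha ▸ min_le_left _ _
  have hb'b : b' ≤ b := hb ▸ le_max_left _ _
  have hMb : M ≤ b := hb ▸ le_max_right _ _
  have hua : ∀ N : ℕ, ∀ l : Fin N, a ≤ u N l := fun N l => haa'.trans (hu_bdd N l).1
  have hva : ∀ N : ℕ, ∀ l : Fin N, a ≤ v N l := fun N l => haa'.trans (hv_bdd N l).1
  have hub : ∀ N : ℕ, ∀ l : Fin N, u N l ≤ b := fun N l => (hu_bdd N l).2.trans hb'b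
  have hvb : ∀ N : ℕ, ∀ l : Fin N, v N l ≤ b := fun N l => (hv_bdd N l).2.trans hb'b
  have hu_dist' : ∀ ϑ : ℝ → ℝ, Continuous ϑ →
      Tendsto (fun N : ℕ => (∑ l : Fin N, ϑ (u N l)) / N) atTop
        (nhds ((∫ x in c..d, ϑ (g x)) / (d - c))) :=
    fun ϑ hϑ => hu_dist ϑ hϑ.continuousOn
  constructor
  · intro h1 ε hε
    have hv_dist' : ∀ ϑ : ℝ → ℝ, Continuous ϑ →
        Tendsto (fun N : ℕ => (∑ l : Fin N, ϑ (v N l)) / N) atTop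
          (nhds ((∫ x in c..d, ϑ (g x)) / (d - c))) := by
      intro ϑ hϑ
      have h1' := h1 ϑ hϑ.continuousOn
      have h2' := (hu_dist' ϑ hϑ).sub h1'
      rw [sub_zero] at h2'
      convert h2' using 2 with N
      rw [div_sub_div_same, ← Finset.sum_sub_distrib]
      congr 1
      exact Finset.sum_congr rfl (fun j _ => by ring)
    have hfwd := eqdist_core a b c d m M hcd g hg_cont hrange hMb u v hu_mono hv_mono hva
      hu_top hv_bot hu_dist' hv_dist' ε hε
    have hbwd := eqdist_core a b c d m M hcd g hg_cont hrange hMb v u hv_mono hu_mono hua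
      hv_top hu_bot hv_dist' hu_dist' ε hε
    obtain ⟨N₀, hN₀⟩ := eventually_atTop.mp (hfwd.and hbwd)
    exact ⟨N₀, fun N hN l => abs_sub_lt_iff.2 ⟨(hN₀ N hN).1 l, (hN₀ N hN).2 l⟩⟩
  · intro h2 ϑ hϑ
    rw [Metric.tendsto_atTop]
    intro ε' hε'
    have huc := isCompact_Icc.uniformContinuousOn_of_continuous hϑ
    rw [Metric.uniformContinuousOn_iff] at huc
    obtain ⟨δ, hδ, H⟩ := huc (ε' / 2) (by linarith)
    obtain ⟨N₀, hN₀⟩ := h2 δ hδ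
    refine ⟨N₀, fun N hN => ?_⟩
    rw [Real.dist_eq, sub_zero]
    have hbound : ∀ l : Fin N, |ϑ (u N l) - ϑ (v N l)| ≤ ε' / 2 := by
      intro l
      have := H (u N l) ⟨hua N l, hub N l⟩ (v N l) ⟨hva N l, hvb N l⟩
        (by rw [Real.dist_eq]; exact hN₀ N hN l)
      rw [Real.dist_eq] at this
      exact this.le
    have h1 : |∑ l : Fin N, (ϑ (u N l) - ϑ (v N l))| ≤ (N : ℝ) * (ε' / 2) := by
      calc |∑ l : Fin N, (ϑ (u N l) - ϑ (v N l))| ≤ ∑ l : Fin N, |ϑ (u N l) - ϑ (v N l)| :=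
        Finset.abs_sum_le_sum_abs _ _
      _ ≤ ∑ _l : Fin N, (ε' / 2) := Finset.sum_le_sum (fun l _ => hbound l)
      _ = (N : ℝ) * (ε' / 2) := by
        rw [Finset.sum_const, Finset.card_univ, Fintype.card_fin, nsmul_eq_mul]
    have h2' : |(∑ l : Fin N, (ϑ (u N l) - ϑ (v N l))) / N| ≤ ε' / 2 := by
      rw [abs_div, Nat.abs_cast]
      rcases Nat.eq_zero_or_pos N with hN0 | hN0
      · subst hN0; simp; linarith
      · have hNp : (0 : ℝ) < N := by exact_mod_cast hN0
        rw [div_le_iff₀ hNp]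
        calc |∑ l : Fin N, (ϑ (u N l) - ϑ (v N l))| ≤ (N : ℝ) * (ε' / 2) := h1
        _ = ε' / 2 * N := by ring
    linarith [h2']

end
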